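/- For every prime p, the infinite product ∏_{k=1}^{∞} (1 + 1/(p + p² + ⋯ + p^k)) converges and equals p/(p−1). -/

import Mathlib

open Filter Topology

theorem prod_one_add_inv_geom_sum' (p : ℕ) (hp : p.Prime) :
    HasProd (fun k : ℕ => 1 + 1 / ∑ i ∈ Finset.Icc 1 (k + 1), (p : ℝ) ^ i)
      ((p : ℝ) / ((p : ℝ) - 1)) := by
  have hp1 : (1 : ℝ) < p := by exact_mod_cast hp.one_lt
  have hp0 : (0 : ℝ) < p := lt_trans one_pos hp1
  have hpm : (0 : ℝ) < (p : ℝ) - 1 := by linarith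
  set f : ℕ → ℝ := fun k => 1 + 1 / ∑ i ∈ Finset.Icc 1 (k + 1), (p : ℝ) ^ i with hf
  set g : ℕ → ℝ := fun n => ((p : ℝ) ^ (n + 1) - 1) / ((p : ℝ) ^ n * ((p : ℝ) - 1)) with hg
  have hpow : ∀ n : ℕ, 1 ≤ n → 1 < (p : ℝ) ^ n := fun n hn => one_lt_pow₀ hp1 (by omega)
  have hpowpos : ∀ n : ℕ, (0 : ℝ) < (p : ℝ) ^ n := fun n => pow_pos hp0 n
  have hSum : ∀ k : ℕ, ∑ i ∈ Finset.Icc 1 (k + 1), (p : ℝ) ^ i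
      = ((p : ℝ) ^ (k + 2) - p) / ((p : ℝ) - 1) := by
    intro k
    induction k with
    | zero => simp; field_simp
    | succ n ih =>
      rw [show n + 1 + 1 = (n + 1) + 1 from rfl, Finset.sum_Icc_succ_top (by omega), ih]
      field_simp
      ring
  have hSpos : ∀ k : ℕ, (0 : ℝ) < ∑ i ∈ Finset.Icc 1 (k + 1), (p : ℝ) ^ i := by
    intro k
    rw [hSum k]
    have h1 := hpow (k + 1) (by omega)
    have h2 : (p : ℝ) ^ (k + 2) = (p : ℝ) ^ (k + 1) * p := by ring
    apply div_pos (by nlinarith) hpm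
  have hf1 : ∀ k, 1 ≤ f k := by
    intro k
    have := hSpos k
    simp only [hf]
    have : 0 < 1 / ∑ i ∈ Finset.Icc 1 (k + 1), (p : ℝ) ^ i := by positivity
    linarith
  have hfpos : ∀ k, 0 < f k := fun k => lt_of_lt_of_le one_pos (hf1 k)
  have hgpos : ∀ n, 0 < g n := by
    intro n
    have := hpow (n + 1) (by omega)
    exact div_pos (by linarith) (mul_pos (hpowpos n) hpm)
  have hfg : ∀ k, f k = g (k + 1) / g k := by
    intro k
    have h1 := hpow (k + 1) (by omega)
    have h2 := hpow (k + 2) (by omega)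
    simp only [hf, hg, hSum k]
    have hpk := hpowpos k
    have hpk1 := hpowpos (k + 1)
    have e1 : (p : ℝ) ^ (k + 2) - p ≠ 0 := by
      have : (p : ℝ) ^ (k + 2) = (p : ℝ) ^ (k + 1) * p := by ring
      nlinarith
    have e2 : (p : ℝ) ^ (k + 1) - 1 ≠ 0 := by nlinarith
    field_simp
    ring
  have hg0 : g 0 = 1 := by
    simp only [hg]
    norm_num
    exact ne_of_gt hpm
  have hprod : ∀ N, ∏ k ∈ Finset.range N, f k = g N := by
    intro N
    induction N with
    | zero => simpa using hg0.symm
    | succ n ih =>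
      rw [Finset.prod_range_succ, ih, hfg n, mul_div_cancel₀]
      exact ne_of_gt (hgpos n)
  have hgl : Tendsto g atTop (𝓝 ((p : ℝ) / ((p : ℝ) - 1))) := by
    have hrw : ∀ n : ℕ, g n = ((p : ℝ) - ((p : ℝ)⁻¹) ^ n) / ((p : ℝ) - 1) := by
      intro n
      simp only [hg]
      rw [inv_pow]
      field_simp
      ring
    have h0 : Tendsto (fun n : ℕ => ((p : ℝ)⁻¹) ^ n) atTop (𝓝 0) := by
      apply tendsto_pow_atTop_nhds_zero_of_lt_one
      · positivity
      · rw [inv_lt_one_iff₀]; right; exact hp1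
    have : Tendsto (fun n : ℕ => ((p : ℝ) - ((p : ℝ)⁻¹) ^ n) / ((p : ℝ) - 1)) atTop
        (𝓝 (((p : ℝ) - 0) / ((p : ℝ) - 1))) := by
      exact ((tendsto_const_nhds.sub h0).div_const _)
    rw [sub_zero] at this
    exact Tendsto.congr (fun n => (hrw n).symm) this
  have hppos : (0 : ℝ) < (p : ℝ) / ((p : ℝ) - 1) := div_pos hp0 hpm
  have hlog : HasSum (fun k => Real.log (f k)) (Real.log ((p : ℝ) / ((p : ℝ) - 1))) := by
    rw [hasSum_iff_tendsto_nat_of_nonneg (fun k => Real.log_nonneg (hf1 k))]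
    have heq : ∀ N, ∑ k ∈ Finset.range N, Real.log (f k) = Real.log (g N) := by
      intro N
      rw [← Real.log_prod (fun k _ => ne_of_gt (hfpos k)), hprod]
    simp only [heq]
    exact ((Real.continuousAt_log (ne_of_gt hppos)).tendsto.comp hgl)
  have := hlog.rexp
  rw [Real.exp_log hppos] at this
  have hfe : (Real.exp ∘ fun k => Real.log (f k)) = f := by
    funext k
    simp [Real.exp_log (hfpos k)]
  rwa [hfe] at this
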